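/- Let n ≥ 3 and let A be a nonsingular n×n 0–1 matrix with columns a₁,…,aₙ and rows r₁,…,rₙ. If A⁻¹ is equimodular, then for all i, j, the vector aᵢ − aⱼ has an even number of nonzero entries, and the vector rᵢ − rⱼ has an even number of nonzero entries. -/

import Mathlib

open Matrix Finset

lemma parity_aux {n : ℕ} {α : ℝ} (hα : α ≠ 0) (s : Fin n → ℝ)
    (hs : ∀ k, s k = α ∨ s k = -α ∨ s k = 0) (hsum : ∑ k, s k = 0) :
    Even ((Finset.univ.filter fun k => s k ≠ 0).card) := by
  set P := Finset.univ.filter (fun k => s k = α) with hP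
  set Q := Finset.univ.filter (fun k => s k = -α) with hQ
  have hdisj : Disjoint P Q := by
    rw [Finset.disjoint_left]
    intro k hk hk'
    simp [hP, hQ] at hk hk'
    rw [hk] at hk'
    exact hα (by linarith)
  have hunion : (Finset.univ.filter fun k => s k ≠ 0) = P ∪ Q := by
    ext k
    simp only [Finset.mem_filter, Finset.mem_union, Finset.mem_univ, true_and, hP, hQ]
    constructor
    · intro hk
      rcases hs k with h | h | h
      · exact Or.inl h
      · exact Or.inr h
      · exact absurd h hk
    · rintro (h | h) <;> rw [h] <;> simpa using hα
  have hsumP : ∑ k ∈ P, s k = P.card * α := by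
    rw [Finset.sum_congr rfl (fun k hk => (Finset.mem_filter.mp hk).2)]
    simp [mul_comm]
    exact Or.inl rfl
  have hsumQ : ∑ k ∈ Q, s k = Q.card * (-α) := by
    rw [Finset.sum_congr rfl (fun k hk => (Finset.mem_filter.mp hk).2)]
    simp [mul_comm]
    exact Or.inl rfl
  have hzero : ∀ k ∈ Finset.univ, k ∉ P ∪ Q → s k = 0 := by
    intro k _ hk
    rcases hs k with h | h | h
    · exact absurd (Finset.mem_union_left _ (by simp [hP, h])) hk
    · exact absurd (Finset.mem_union_right _ (by simp [hQ, h])) hk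
    · exact h
  have h1 : ∑ k ∈ P ∪ Q, s k = 0 := by
    rw [Finset.sum_subset (Finset.subset_univ (P ∪ Q)) hzero]
    exact hsum
  rw [Finset.sum_union hdisj, hsumP, hsumQ] at h1
  have hcard : P.card = Q.card := by
    have : (P.card : ℝ) = Q.card := by
      have := mul_right_cancel₀ hα (by linarith : (P.card : ℝ) * α = (Q.card : ℝ) * α)
      exact this
    exact_mod_cast this
  rw [hunion, Finset.card_union_of_disjoint hdisj, hcard]
  exact Even.add_self _

theorem stmt8 {n : ℕ} (hn : 3 ≤ n) (A : Matrix (Fin n) (Fin n) ℝ)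
    (hA : IsUnit A.det)
    (h01 : ∀ i j, A i j = 0 ∨ A i j = 1)
    (hequi : ∃ α : ℝ, ∀ i j, A⁻¹ i j = α ∨ A⁻¹ i j = -α) :
    ∀ i j : Fin n,
      Even ((Finset.univ.filter fun r => A r i - A r j ≠ 0).card) ∧
      Even ((Finset.univ.filter fun c => A i c - A j c ≠ 0).card) := by
  obtain ⟨α, hB⟩ := hequi
  set B := A⁻¹ with hBdef
  have hBA : B * A = 1 := Matrix.nonsing_inv_mul A hA
  have hAB : A * B = 1 := Matrix.mul_nonsing_inv A hA
  have hn0 : 0 < n := by omega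
  have hα : α ≠ 0 := by
    intro h0
    subst h0
    have i0 : Fin n := ⟨0, hn0⟩
    have h1 : (B * A) i0 i0 = 1 := by rw [hBA]; simp
    rw [Matrix.mul_apply] at h1
    have : ∑ k, B i0 k * A k i0 = 0 := by
      apply Finset.sum_eq_zero
      intro k _
      rcases hB i0 k with h | h <;> simp [h]
    rw [this] at h1
    exact one_ne_zero h1.symm
  have hBne : ∀ i j, B i j ≠ 0 := by
    intro i j
    rcases hB i j with h | h <;> rw [h] <;> simpa using hα
  intro i j
  by_cases hij : i = j
  · subst hij
    constructor <;> · convert (Nat.even_iff.mpr rfl : Even (0 : ℕ)) <;> simp [Finset.filter_eq_empty_iff]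
  · -- find r ≠ i, r ≠ j
    have hex : ∃ r : Fin n, r ≠ i ∧ r ≠ j := by
      have hne : (({i, j} : Finset (Fin n))ᶜ).Nonempty := by
        rw [← Finset.card_pos, Finset.card_compl]
        have : ({i, j} : Finset (Fin n)).card ≤ 2 :=
          (Finset.card_insert_le _ _).trans (by simp)
        simp only [Fintype.card_fin]
        omega
      obtain ⟨r, hr⟩ := hne
      simp only [Finset.mem_compl, Finset.mem_insert, Finset.mem_singleton, not_or] at hr
      exact ⟨r, hr.1, hr.2⟩
    obtain ⟨r, hri, hrj⟩ := hex
    constructor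
    · -- columns
      have key := parity_aux hα (fun k => B r k * (A k i - A k j)) ?_ ?_
      · convert key using 2
        apply Finset.filter_congr
        intro k _
        simp only [mul_ne_zero_iff]
        constructor
        · intro h; exact ⟨hBne r k, h⟩
        · intro h; exact h.2
      · intro k
        rcases hB r k with hb | hb <;> rcases h01 k i with h1 | h1 <;>
          rcases h01 k j with h2 | h2 <;> simp [hb, h1, h2]
      · have e1 : (B * A) r i = 0 := by rw [hBA]; simp [Matrix.one_apply, hri]
        have e2 : (B * A) r j = 0 := by rw [hBA]; simp [Matrix.one_apply, hrj]
        rw [Matrix.mul_apply] at e1 e2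
        simp only [mul_sub]
        rw [Finset.sum_sub_distrib, e1, e2, sub_zero]
    · -- rows
      have key := parity_aux hα (fun k => (A i k - A j k) * B k r) ?_ ?_
      · convert key using 2
        apply Finset.filter_congr
        intro k _
        simp only [mul_ne_zero_iff]
        constructor
        · intro h; exact ⟨h, hBne k r⟩
        · intro h; exact h.1
      · intro k
        rcases hB k r with hb | hb <;> rcases h01 i k with h1 | h1 <;>
          rcases h01 j k with h2 | h2 <;> simp [hb, h1, h2]
      · have e1 : (A * B) i r = 0 := by rw [hAB]; simp [Matrix.one_apply, hri.symm]
        have e2 : (A * B) j r = 0 := by rw [hAB]; simp [Matrix.one_apply, hrj.symm]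
        rw [Matrix.mul_apply] at e1 e2
        simp only [sub_mul]
        rw [Finset.sum_sub_distrib, e1, e2, sub_zero]
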